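/- If (U) = {a ∈ R | S(a) ∈ U} is a maximal ideal of R = ∏_{λ∈Λ} D_λ for every ultrafilter U in B, then for every λ ∈ Λ the set max(D_λ) is proconstructible in spec(D_λ), i.e. for every ultrafilter F on the set max(D_λ), the set X_F = {r ∈ D_λ | V(r) ∈ F} is a maximal ideal of D_λ. -/

import Mathlib

/-!
Common setup: `Λ` is an index set, `D λ` a family of commutative rings,
`R = ∏ λ, D λ` the product ring, and
`B = ∏ λ, P(max (D λ))` the product Boolean algebra of the power sets of the
sets of maximal ideals, realized as the Pi type `∀ l, Set (MaximalSpectrum (D l))`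
with its componentwise Boolean algebra structure (meet = componentwise ∩,
join = componentwise ∪, `⊥ = (∅)_λ`, complement componentwise, order = componentwise ⊆).
-/

variable {Λ : Type*} {D : Λ → Type*}

/-- `S(a) = (V(a_λ))_λ ∈ B`, where `V(x)` is the set of maximal ideals containing `x`. -/
def SFam [∀ l, CommRing (D l)] (a : ∀ l, D l) : ∀ l, Set (MaximalSpectrum (D l)) :=
  fun l => {P | a l ∈ P.asIdeal}

/-- `z(x) = {λ | x_λ = 0}`. -/
def ZFam [∀ l, CommRing (D l)] (x : ∀ l, D l) : Set Λ := {l | x l = 0}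

/-- A filter in a Boolean algebra: a nonempty subset not containing `⊥`, closed
under meets, and upward closed. -/
def IsBFilter {B : Type*} [BooleanAlgebra B] (U : Set B) : Prop :=
  U.Nonempty ∧ ⊥ ∉ U ∧ (∀ X ∈ U, ∀ Y ∈ U, X ⊓ Y ∈ U) ∧ (∀ Y ∈ U, ∀ Z, Y ≤ Z → Z ∈ U)

/-- An ultrafilter in a Boolean algebra: a filter containing `Y` or `Yᶜ` for every `Y`. -/
def IsBUltrafilter {B : Type*} [BooleanAlgebra B] (U : Set B) : Prop :=
  IsBFilter U ∧ ∀ Y, Y ∈ U ∨ Yᶜ ∈ U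

/-- Property (+): for all `r` and all nonzero `a` there is `d` lying in every maximal
ideal containing `a` but not `r`, and in no maximal ideal containing `r`. -/
def PropertyPlus (A : Type*) [CommRing A] : Prop :=
  ∀ r a : A, a ≠ 0 → ∃ d : A,
    (∀ M : Ideal A, M.IsMaximal → a ∈ M → r ∉ M → d ∈ M) ∧
    (∀ M : Ideal A, M.IsMaximal → r ∈ M → d ∉ M)

/-- Property (++): for every `r` there is `d` with `D(r) = V(d)`, i.e. the maximal
ideals containing `d` are exactly those not containing `r`. -/
def PropertyPlusPlus (A : Type*) [CommRing A] : Prop :=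
  ∀ r : A, ∃ d : A, ∀ P : MaximalSpectrum A, d ∈ P.asIdeal ↔ r ∉ P.asIdeal

/-- If `(U)` is a maximal ideal of `R` for every ultrafilter `U` in `B`, then for
every `l` the set of maximal ideals of `D l` is proconstructible in the prime
spectrum, i.e. for every ultrafilter `F` on the set of maximal ideals of `D l`,
the set of `r` with `V r ∈ F` is a maximal ideal of `D l`. -/
theorem stmt_10 [∀ l, CommRing (D l)] [∀ l, Nontrivial (D l)]
    (h : ∀ U : Set (∀ l, Set (MaximalSpectrum (D l))), IsBUltrafilter U →
      ∃ I : Ideal (∀ l, D l), (∀ a, a ∈ I ↔ SFam a ∈ U) ∧ I.IsMaximal) :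
    ∀ l, ∀ F : Ultrafilter (MaximalSpectrum (D l)),
      ∃ M : Ideal (D l), M.IsMaximal ∧
        ∀ r : D l, r ∈ M ↔ {P : MaximalSpectrum (D l) | r ∈ P.asIdeal} ∈ F := by
  classical
  intro l F
  -- the ultrafilter in B determined by F at coordinate l
  set U : Set (∀ l', Set (MaximalSpectrum (D l'))) := {Y | Y l ∈ F} with hU
  have hUultra : IsBUltrafilter U := by
    refine ⟨⟨⟨⊤, ?_⟩, ?_, ?_, ?_⟩, ?_⟩
    · show (⊤ : ∀ l', Set (MaximalSpectrum (D l'))) l ∈ F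
      exact Filter.univ_mem
    · show (⊥ : ∀ l', Set (MaximalSpectrum (D l'))) l ∉ F
      exact F.empty_notMem
    · intro X hX Y hY
      exact Filter.inter_mem hX hY
    · intro Y hY Z hYZ
      exact Filter.mem_of_superset hY (hYZ l)
    · intro Y
      exact (F.mem_or_compl_mem (Y l)).imp id id
  obtain ⟨I, hImem, hImax⟩ := h U hUultra
  -- membership in I only depends on the l-th coordinate
  have hIchar : ∀ a : ∀ l', D l', a ∈ I ↔ {P : MaximalSpectrum (D l) | a l ∈ P.asIdeal} ∈ F := by
    intro a
    rw [hImem a]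
    rfl
  set f : (∀ l', D l') →+* D l := Pi.evalRingHom D l with hf
  have hfsurj : Function.Surjective f := fun r =>
    ⟨Function.update (0 : ∀ l', D l') l r, by simp [hf]⟩
  refine ⟨I.map f, ?_, ?_⟩
  · rcases Ideal.map_eq_top_or_isMaximal_of_surjective f hfsurj hImax with htop | hmax
    · exfalso
      have h1 : (1 : D l) ∈ I.map f := htop ▸ Submodule.mem_top
      rw [Ideal.mem_map_iff_of_surjective f hfsurj] at h1
      obtain ⟨a, haI, hfa⟩ := h1
      rw [hIchar] at haI
      have : {P : MaximalSpectrum (D l) | a l ∈ P.asIdeal} = ∅ := by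
        ext P
        simp only [Set.mem_setOf_eq, Set.mem_empty_iff_false, iff_false]
        intro hmem
        exact (Ideal.ne_top_iff_one _).mp P.isMaximal.ne_top (by rw [← hfa]; exact hmem)
      rw [this] at haI
      exact F.empty_notMem haI
    · exact hmax
  · intro r
    rw [Ideal.mem_map_iff_of_surjective f hfsurj]
    constructor
    · rintro ⟨a, haI, rfl⟩
      exact (hIchar a).mp haI
    · intro hr
      refine ⟨Function.update (0 : ∀ l', D l') l r, ?_, by simp [hf]⟩
      rw [hIchar]
      simpa [Function.update_self] using hr
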